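/- Let M = (S, A, X, T, i) be a parametric MDP with induced POMDP M', let p ∈ Dist(X) be a parameter distribution, and let r : Runs_X → ℝ be a measurable objective function. Set r' = r ∘ f⁻¹ and i'(s,x) = i(s)·p(x). Then the values coincide: Val^M(p,r) = Val^{M'}(r'), where Val^M(p,r) = sup over pMDP policies π_X of E^M_{π_X,i,p}(r) and Val^{M'}(r') = sup over POMDP policies π' of E^{M'}_{π',i'}(r'). -/

import Mathlib

open MeasureTheory ENNReal

namespace PMDPEncoding

universe u v w

variable {S : Type u} {A : Type v} {X : Type w}

/-- An infinite alternating sequence of state-action pairs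
(the `k`-th pair consists of the `k`-th state and the `k`-th action of the run). -/
abbrev RunSeq (S : Type u) (A : Type v) := ℕ → S × A

/-- `ρ` is a run of the MDP with transition function `T`:
all transitions have positive probability. -/
def IsRun (T : S → A → PMF S) (ρ : RunSeq S A) : Prop :=
  ∀ k, 0 < T (ρ k).1 (ρ k).2 (ρ (k + 1)).1

/-- A history: a finite list of state-action pairs followed by a final state. -/
abbrev Hist (S : Type u) (A : Type v) := List (S × A) × S

/-- The first state of a history. -/
def Hist.first (h : Hist S A) : S :=
  match h.1 with
  | [] => h.2
  | p :: _ => p.1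

/-- Auxiliary for `IsHist`: validity of the list part of a history with final state `t`. -/
def IsHistL (T : S → A → PMF S) : List (S × A) → S → Prop
  | [], _ => True
  | (s, a) :: rest, t => 0 < T s a (Hist.first (rest, t)) ∧ IsHistL T rest t

/-- `h` is a history (finite prefix of a run) of the MDP with transition function `T`. -/
def IsHist (T : S → A → PMF S) (h : Hist S A) : Prop := IsHistL T h.1 h.2

/-- The set of runs of the MDP with transition function `T`. -/
def Runs (T : S → A → PMF S) := {ρ : RunSeq S A // IsRun T ρ}

/-- The set of (raw) sequences having the history `h` as a prefix. -/
def ConeSeq (h : Hist S A) : Set (RunSeq S A) :=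
  {ρ | (∀ k, (hk : k < h.1.length) → ρ k = h.1[k]'hk) ∧ (ρ h.1.length).1 = h.2}

/-- The cone of a history: the set of runs with prefix `h`. -/
def Cone (T : S → A → PMF S) (h : Hist S A) : Set (Runs T) :=
  {ρ | ρ.1 ∈ ConeSeq h}

/-- The σ-algebra on runs generated by the cones of histories. -/
instance conesAlg (T : S → A → PMF S) : MeasurableSpace (Runs T) :=
  MeasurableSpace.generateFrom {C | ∃ h : Hist S A, IsHist T h ∧ C = Cone T h}

/-- Valid histories of an MDP, as a subtype. -/
def HistOf (T : S → A → PMF S) := {h : Hist S A // IsHist T h}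

/-- Auxiliary function for the probability of a cone:
`pre` is the prefix of the history processed so far. -/
noncomputable def coneProbAux (T : S → A → PMF S) (π : Hist S A → PMF A) :
    List (S × A) → List (S × A) → S → ℝ≥0∞
  | _, [], _ => 1
  | pre, (s, a) :: rest, t =>
      π (pre, s) a * T s a (Hist.first (rest, t)) *
        coneProbAux T π (pre ++ [(s, a)]) rest t

/-- The probability `i(s₀) · ∏_{k<n} π(s₀a₀…s_k)(a_k) · T(s_k,a_k)(s_{k+1})` that the
induced measure of policy `π` and initial distribution `i` assigns to the cone of a history. -/
noncomputable def coneProb (T : S → A → PMF S) (i : PMF S) (π : Hist S A → PMF A)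
    (h : Hist S A) : ℝ≥0∞ :=
  i h.first * coneProbAux T π [] h.1 h.2

/-- The evaluated transition function `T_x` of a pMDP at parameter point `x`. -/
def evalT (T : S → A → X → PMF S) (x : X) : S → A → PMF S := fun s a => T s a x

/-- Runs of a pMDP: pairs `(x, ρ)` of a parameter value `x` and a run `ρ` of `M(x)`. -/
def RunsX (T : S → A → X → PMF S) := {q : X × RunSeq S A // IsRun (evalT T q.1) q.2}

/-- Valid histories of a pMDP: pairs `(x, h)` with `h` a history of `M(x)`. -/
def HistX (T : S → A → X → PMF S) := {q : X × Hist S A // IsHist (evalT T q.1) q.2}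

/-- The generator set `{x} × Cone(h)` of the σ-algebra on the runs of a pMDP. -/
def ConeX (T : S → A → X → PMF S) (x : X) (h : Hist S A) : Set (RunsX T) :=
  {q | q.1.1 = x ∧ q.1.2 ∈ ConeSeq h}

/-- The σ-algebra on the runs of a pMDP generated by the sets `{x} × Cone(h)`. -/
instance conesXAlg (T : S → A → X → PMF S) : MeasurableSpace (RunsX T) :=
  MeasurableSpace.generateFrom
    {C | ∃ (x : X) (h : Hist S A), IsHist (evalT T x) h ∧ C = ConeX T x h}

/-- The transition function `T'` of the induced POMDP of a pMDP:
`T'((s,x),a)(s',x') = T(s,a)(x)(s') · δ_x(x')`. -/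
noncomputable def indT (T : S → A → X → PMF S) : S × X → A → PMF (S × X) :=
  fun sx a => (T sx.1 a sx.2).map fun s' => (s', sx.2)

/-- The observation function of the induced POMDP: `O(s,x) = s`. -/
def obs : S × X → S := Prod.fst

/-- The observation map extended to histories of the induced POMDP. -/
def obsHist : Hist (S × X) A → Hist S A :=
  fun h => (h.1.map fun p => (p.1.1, p.2), h.2.1)

/-- The map `f` on raw sequences: `f(x, s₀·a₀·s₁·⋯) = (s₀,x)·a₀·(s₁,x)·⋯`. -/
def fSeq (x : X) (ρ : RunSeq S A) : RunSeq (S × X) A :=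
  fun k => (((ρ k).1, x), (ρ k).2)

theorem indT_pos {T : S → A → X → PMF S} {s s' : S} {a : A} {x : X}
    (h : 0 < T s a x s') : 0 < indT T (s, x) a (s', x) := by
  have hmem : (s', x) ∈ ((T s a x).map fun u => (u, x)).support := by
    rw [PMF.support_map]
    exact ⟨s', (PMF.mem_support_iff _ _).2 h.ne', rfl⟩
  exact pos_iff_ne_zero.mpr ((PMF.mem_support_iff _ _).1 hmem)

/-- The map `f : Runs_X → Runs'` from the runs of a pMDP to the runs of its induced POMDP. -/
def fRun (T : S → A → X → PMF S) (q : RunsX T) : Runs (indT T) :=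
  ⟨fSeq q.1.1 q.1.2, fun k => indT_pos (q.2 k)⟩

/-- The map `f` on raw histories: `f(x, s₀·a₀·⋯·s_n) = (s₀,x)·a₀·⋯·(s_n,x)`. -/
def fHistSeq (x : X) (h : Hist S A) : Hist (S × X) A :=
  (h.1.map fun p => ((p.1, x), p.2), (h.2, x))

theorem isHist_fHistSeq (T : S → A → X → PMF S) (x : X) :
    ∀ (l : List (S × A)) (t : S), IsHist (evalT T x) (l, t) →
      IsHist (indT T) (fHistSeq x (l, t))
  | [], _, _ => trivial
  | (s, a) :: rest, t, hv => by
      obtain ⟨h1, h2⟩ := hv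
      have hrec := isHist_fHistSeq T x rest t h2
      refine ⟨?_, hrec⟩
      show 0 < indT T (s, x) a (Hist.first ((rest.map fun p => ((p.1, x), p.2)), (t, x)))
      have hfirst : Hist.first ((rest.map fun p => ((p.1, x), p.2) : List ((S × X) × A)), (t, x)) =
          (Hist.first (rest, t), x) := by
        cases rest <;> rfl
      rw [hfirst]
      exact indT_pos h1

/-- The map `f : Hist_X → Hist'` from the histories of a pMDP to the histories of
its induced POMDP. -/
def fHistX (T : S → A → X → PMF S) (q : HistX T) : HistOf (indT T) :=
  ⟨fHistSeq q.1.1 q.1.2, isHist_fHistSeq T q.1.1 q.1.2.1 q.1.2.2 q.2⟩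

/-- Some run of an MDP: start anywhere, always pick a fixed action, and follow the
support of the transition distributions. -/
noncomputable def someRunSeq (T : S → A → PMF S) (sa : S × A) (a : A) : RunSeq S A :=
  fun k => Nat.rec sa (fun _ ih => ((PMF.support_nonempty (T ih.1 ih.2)).some, a)) k

theorem someRunSeq_isRun (T : S → A → PMF S) (sa : S × A) (a : A) :
    IsRun T (someRunSeq T sa a) := by
  intro k
  exact pos_iff_ne_zero.mpr <| (PMF.mem_support_iff _ _).1 <|
    (PMF.support_nonempty (T (someRunSeq T sa a k).1 (someRunSeq T sa a k).2)).some_mem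

instance instNonemptyRuns [Nonempty S] [Nonempty A] (T : S → A → PMF S) :
    Nonempty (Runs T) :=
  ⟨⟨someRunSeq T (Classical.arbitrary S, Classical.arbitrary A) (Classical.arbitrary A),
    someRunSeq_isRun _ _ _⟩⟩

instance instNonemptyRunsX [Nonempty S] [Nonempty A] [Nonempty X] (T : S → A → X → PMF S) :
    Nonempty (RunsX T) :=
  ⟨⟨(Classical.arbitrary X,
      someRunSeq (evalT T (Classical.arbitrary X))
        (Classical.arbitrary S, Classical.arbitrary A) (Classical.arbitrary A)),
    someRunSeq_isRun _ _ _⟩⟩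

instance instNonemptyHistX [Nonempty S] [Nonempty X] (T : S → A → X → PMF S) :
    Nonempty (HistX T) :=
  ⟨⟨(Classical.arbitrary X, ([], Classical.arbitrary S)), trivial⟩⟩

instance instNonemptyHistOf [Nonempty S] (T : S → A → PMF S) :
    Nonempty (HistOf T) :=
  ⟨⟨([], Classical.arbitrary S), trivial⟩⟩

lemma indT_apply (T : S → A → X → PMF S) (s s' : S) (a : A) (x : X) :
    indT T (s, x) a (s', x) = T s a x s' := by
  rw [indT, PMF.map_apply, tsum_eq_single s']
  · simp
  · intro u hu
    simp [Prod.ext_iff, (Ne.symm hu : ¬ s' = u)]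

lemma indT_pos_iff {T : S → A → X → PMF S} {s : S} {a : A} {x : X} {q : S × X} :
    0 < indT T (s, x) a q ↔ q.2 = x ∧ 0 < T s a x q.1 := by
  constructor
  · intro h
    have hm : q ∈ (indT T (s, x) a).support := (PMF.mem_support_iff _ _).2 h.ne'
    rw [indT, PMF.support_map] at hm
    obtain ⟨u, hu, rfl⟩ := hm
    exact ⟨rfl, pos_iff_ne_zero.2 ((PMF.mem_support_iff _ _).1 hu)⟩
  · rintro ⟨h2, h1⟩
    obtain ⟨q1, q2⟩ := q
    cases h2
    exact indT_pos h1

lemma first_append (l1 l2 : List (S × A)) (t : S) :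
    Hist.first (l1 ++ l2, t) = Hist.first (l1, Hist.first (l2, t)) := by
  cases l1 <;> rfl

lemma isHistL_prefix (T : S → A → PMF S) :
    ∀ (l1 l2 : List (S × A)) (t : S), IsHistL T (l1 ++ l2) t →
      IsHistL T l1 (Hist.first (l2, t))
  | [], _, _, _ => trivial
  | (s, a) :: l1, l2, t, ⟨h1, h2⟩ => by
      have h1' : 0 < T s a (Hist.first (l1 ++ l2, t)) := h1
      rw [first_append] at h1'
      exact ⟨h1', isHistL_prefix T l1 l2 t h2⟩

lemma first_fHistSeq (x : X) (l : List (S × A)) (t : S) :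
    Hist.first ((l.map fun p => ((p.1, x), p.2) : List ((S × X) × A)), (t, x)) =
      (Hist.first (l, t), x) := by
  cases l <;> rfl

lemma obsHist_fHistSeq (x : X) (h : Hist S A) : obsHist (fHistSeq x h) = h := by
  obtain ⟨l, t⟩ := h
  show ((l.map fun p => ((p.1, x), p.2)).map (fun p => (p.1.1, p.2)), t) = (l, t)
  rw [List.map_map,
    show ((fun p : (S × X) × A => (p.1.1, p.2)) ∘ fun p : S × A => ((p.1, x), p.2)) = id
      from rfl, List.map_id]

lemma fHistSeq_obsHist_list (T : S → A → X → PMF S) :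
    ∀ (l' : List ((S × X) × A)) (t : S) (x : X), IsHistL (indT T) l' (t, x) →
      (l'.map fun p => ((p.1.1, x), p.2)) = l'
  | [], _, _, _ => rfl
  | ((s, y), a) :: rest, t, x, ⟨h1, h2⟩ => by
      have hrest := fHistSeq_obsHist_list T rest t x h2
      have hfx : (Hist.first (rest, (t, x)) : S × X).2 = x := by
        cases rest with
        | nil => rfl
        | cons p r =>
            have hh : ((p.1.1, x), p.2) = p := by
              have := congrArg List.head? hrest
              simpa using this
            exact congrArg (fun q : (S × X) × A => q.1.2) hh.symm
      have hy : y = x := by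
        have := (indT_pos_iff.1 h1).1
        rw [hfx] at this
        exact this.symm
      simp only [List.map_cons, hrest, hy]

lemma obs_first (rest : List ((S × X) × A)) (t : S) (x : X) :
    Hist.first ((rest.map fun p => (p.1.1, p.2) : List (S × A)), t) =
      (Hist.first (rest, (t, x)) : S × X).1 := by
  cases rest <;> rfl

lemma isHistL_obs (T : S → A → X → PMF S) :
    ∀ (l' : List ((S × X) × A)) (t : S) (x : X), IsHistL (indT T) l' (t, x) →
      IsHistL (evalT T x) (l'.map fun p => (p.1.1, p.2)) t
  | [], _, _, _ => trivial
  | ((s, y), a) :: rest, t, x, ⟨h1, h2⟩ => by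
      have hrest := fHistSeq_obsHist_list T rest t x h2
      have hfx : (Hist.first (rest, (t, x)) : S × X).2 = x := by
        cases rest with
        | nil => rfl
        | cons p r =>
            have hh : ((p.1.1, x), p.2) = p := by
              have := congrArg List.head? hrest
              simpa using this
            exact congrArg (fun q : (S × X) × A => q.1.2) hh.symm
      obtain ⟨hq2, hpos⟩ := indT_pos_iff.1 h1
      have hy : y = x := by rw [hfx] at hq2; exact hq2.symm
      refine ⟨?_, isHistL_obs T rest t x h2⟩
      show 0 < evalT T x s a (Hist.first ((rest.map fun p => (p.1.1, p.2)), t))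
      rw [obs_first rest t x]
      subst hy
      exact hpos

/-- Reconstruction: a valid history of the induced POMDP is `fHistSeq x` of its observation. -/
lemma fHistSeq_obsHist {T : S → A → X → PMF S} {h' : Hist (S × X) A}
    (hv : IsHist (indT T) h') : fHistSeq h'.2.2 (obsHist h') = h' := by
  obtain ⟨l', t'⟩ := h'
  obtain ⟨t, x⟩ := t'
  show ((l'.map fun p => (p.1.1, p.2)).map fun p => ((p.1, x), p.2), (t, x)) = (l', (t, x))
  rw [List.map_map,
    show ((fun p : S × A => ((p.1, x), p.2)) ∘ fun p : (S × X) × A => (p.1.1, p.2)) =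
      fun p : (S × X) × A => ((p.1.1, x), p.2) from rfl,
    fHistSeq_obsHist_list T l' t x hv]

lemma fRun_preimage (T : S → A → X → PMF S) (x : X) (h : Hist S A) :
    fRun T ⁻¹' Cone (indT T) (fHistSeq x h) = ConeX T x h := by
  ext q
  obtain ⟨⟨y, ρ⟩, hq⟩ := q
  show fSeq y ρ ∈ ConeSeq (fHistSeq x h) ↔ y = x ∧ ρ ∈ ConeSeq h
  simp only [ConeSeq, fHistSeq, Set.mem_setOf_eq, List.length_map, List.getElem_map]
  constructor
  · rintro ⟨h1, h2⟩
    have h2' : ((ρ h.1.length).1, y) = (h.2, x) := h2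
    refine ⟨congrArg Prod.snd h2', fun k hk => ?_, congrArg Prod.fst h2'⟩
    have h1' : (((ρ k).1, y), (ρ k).2) = ((h.1[k].1, x), h.1[k].2) := h1 k hk
    exact Prod.ext (congrArg (fun z : (S × X) × A => z.1.1) h1')
      (congrArg (fun z : (S × X) × A => z.2) h1')
  · rintro ⟨rfl, h1, h2⟩
    constructor
    · intro k hk
      show (((ρ k).1, y), (ρ k).2) = ((h.1[k].1, y), h.1[k].2)
      rw [h1 k hk]
    · show ((ρ h.1.length).1, y) = (h.2, y)
      rw [h2]

lemma fRun_injective (T : S → A → X → PMF S) : Function.Injective (fRun T) := by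
  rintro ⟨⟨x, ρ⟩, hq⟩ ⟨⟨x', ρ'⟩, hq'⟩ he
  have he' : fSeq x ρ = fSeq x' ρ' := congrArg Subtype.val he
  have hx : x = x' := congrArg (fun f => (f 0).1.2) he'
  have hρ : ρ = ρ' := by
    funext k
    exact Prod.ext (congrArg (fun f => (f k).1.1) he') (congrArg (fun f => (f k).2) he')
  subst hx; subst hρ; rfl

lemma fRun_surjective (T : S → A → X → PMF S) : Function.Surjective (fRun T) := by
  rintro ⟨ρ', hρ'⟩
  have hconst : ∀ k, (ρ' k).1.2 = (ρ' 0).1.2 := by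
    intro k
    induction k with
    | zero => rfl
    | succ n ih =>
        have h := (@indT_pos_iff S A X T (ρ' n).1.1 (ρ' n).2 (ρ' n).1.2 (ρ' (n+1)).1).1 (hρ' n)
        rw [← ih]
        exact h.1
  refine ⟨⟨((ρ' 0).1.2, fun k => ((ρ' k).1.1, (ρ' k).2)), ?_⟩, ?_⟩
  · intro k
    have h := (@indT_pos_iff S A X T (ρ' k).1.1 (ρ' k).2 (ρ' k).1.2 (ρ' (k+1)).1).1 (hρ' k)
    show 0 < T (ρ' k).1.1 (ρ' k).2 (ρ' 0).1.2 (ρ' (k+1)).1.1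
    rw [← hconst k]
    exact h.2
  · apply Subtype.ext
    funext k
    show (((ρ' k).1.1, (ρ' 0).1.2), (ρ' k).2) = ρ' k
    rw [← hconst k]

lemma measurable_fRun (T : S → A → X → PMF S) : Measurable (fRun T) := by
  refine measurable_generateFrom ?_
  rintro C ⟨h', hv, rfl⟩
  have hrep := fHistSeq_obsHist (T := T) hv
  rw [← hrep, fRun_preimage]
  apply MeasurableSpace.measurableSet_generateFrom
  obtain ⟨l', t, x⟩ := h'
  exact ⟨x, obsHist (l', (t, x)), isHistL_obs T l' t x hv, rfl⟩

lemma measurable_invFun_fRun [Nonempty S] [Nonempty A] [Nonempty X]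
    (T : S → A → X → PMF S) : Measurable (Function.invFun (fRun T)) := by
  have hri := Function.rightInverse_invFun (fRun_surjective T)
  refine measurable_generateFrom ?_
  rintro C ⟨x, h, hv, rfl⟩
  have himg : Function.invFun (fRun T) ⁻¹' ConeX T x h = Cone (indT T) (fHistSeq x h) := by
    ext ρ'
    have hr : fRun T (Function.invFun (fRun T) ρ') = ρ' := hri ρ'
    rw [← fRun_preimage T x h]
    show fRun T (Function.invFun (fRun T) ρ') ∈ Cone (indT T) (fHistSeq x h) ↔
      ρ' ∈ Cone (indT T) (fHistSeq x h)
    rw [hr]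
  rw [himg]
  exact MeasurableSpace.measurableSet_generateFrom
    ⟨fHistSeq x h, isHist_fHistSeq T x h.1 h.2 hv, rfl⟩

lemma coneProbAux_corr (T : S → A → X → PMF S) (x : X)
    (π' : Hist (S × X) A → PMF A) (πx : Hist S A → PMF A)
    (hagree : ∀ g : Hist S A, IsHist (evalT T x) g → π' (fHistSeq x g) = πx g) :
    ∀ (l : List (S × A)) (t : S) (pre : List (S × A)), IsHistL (evalT T x) (pre ++ l) t →
      coneProbAux (indT T) π' (pre.map fun p => ((p.1, x), p.2))
          (l.map fun p => ((p.1, x), p.2)) (t, x)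
        = coneProbAux (evalT T x) πx pre l t
  | [], _, _, _ => rfl
  | (s, a) :: rest, t, pre, hv => by
      have hpre : IsHist (evalT T x) (pre, s) :=
        isHistL_prefix (evalT T x) pre ((s, a) :: rest) t hv
      have hv' : IsHistL (evalT T x) ((pre ++ [(s, a)]) ++ rest) t := by
        rwa [List.append_assoc]
      have hrec := coneProbAux_corr T x π' πx hagree rest t (pre ++ [(s, a)]) hv'
      have hag : π' ((pre.map fun p => ((p.1, x), p.2)), (s, x)) = πx (pre, s) :=
        hagree (pre, s) hpre
      show π' ((pre.map fun p => ((p.1, x), p.2)), (s, x)) a *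
          indT T (s, x) a (Hist.first ((rest.map fun p => ((p.1, x), p.2)), (t, x))) *
          coneProbAux (indT T) π'
            ((pre.map fun p => ((p.1, x), p.2)) ++ [((s, x), a)])
            (rest.map fun p => ((p.1, x), p.2)) (t, x)
        = πx (pre, s) a * evalT T x s a (Hist.first (rest, t)) *
          coneProbAux (evalT T x) πx (pre ++ [(s, a)]) rest t
      rw [hag, first_fHistSeq, indT_apply]
      have hmap : (pre.map fun p : S × A => ((p.1, x), p.2)) ++ [((s, x), a)] =
          (pre ++ [(s, a)]).map fun p => ((p.1, x), p.2) := by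
        rw [List.map_append]
        rfl
      rw [hmap, hrec]
      rfl

lemma coneProb_corr (T : S → A → X → PMF S) (i : PMF S) (p : PMF X)
    (i' : PMF (S × X)) (hi' : ∀ s x, i' (s, x) = i s * p x) (x : X)
    (π' : Hist (S × X) A → PMF A) (πx : Hist S A → PMF A)
    (hagree : ∀ g : Hist S A, IsHist (evalT T x) g → π' (fHistSeq x g) = πx g)
    (h : Hist S A) (hv : IsHist (evalT T x) h) :
    coneProb (indT T) i' π' (fHistSeq x h) = p x * coneProb (evalT T x) i πx h := by
  obtain ⟨l, t⟩ := h
  show i' (Hist.first ((l.map fun p => ((p.1, x), p.2)), (t, x))) *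
      coneProbAux (indT T) π' [] (l.map fun p => ((p.1, x), p.2)) (t, x)
    = p x * (i (Hist.first (l, t)) * coneProbAux (evalT T x) πx [] l t)
  rw [first_fHistSeq, hi']
  have haux := coneProbAux_corr T x π' πx hagree l t [] hv
  have hnil : (([] : List (S × A)).map fun p => ((p.1, x), p.2)) = [] := rfl
  rw [hnil] at haux
  rw [haux]
  ring

lemma isPiSystem_cones (T₀ : S → A → PMF S) :
    IsPiSystem {C : Set (Runs T₀) | ∃ h : Hist S A, IsHist T₀ h ∧ C = Cone T₀ h} := by
  have key : ∀ (h1 h2 : Hist S A), h1.1.length ≤ h2.1.length →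
      (Cone T₀ h1 ∩ Cone T₀ h2).Nonempty → Cone T₀ h1 ∩ Cone T₀ h2 = Cone T₀ h2 := by
    rintro h1 h2 hlen ⟨ρ₀, hρ₁, hρ₂⟩
    apply Set.inter_eq_self_of_subset_right
    rintro ρ ⟨ha, hb⟩
    obtain ⟨ha1, hb1⟩ := hρ₁
    obtain ⟨ha2, hb2⟩ := hρ₂
    constructor
    · intro k hk
      rw [ha k (lt_of_lt_of_le hk hlen), ← ha2 k (lt_of_lt_of_le hk hlen), ha1 k hk]
    · rcases lt_or_eq_of_le hlen with hlt | heq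
      · rw [ha h1.1.length hlt, ← ha2 h1.1.length hlt, hb1]
      · rw [heq, hb, ← hb2, ← heq, hb1]
  rintro C1 ⟨h1, hv1, rfl⟩ C2 ⟨h2, hv2, rfl⟩ hne
  rcases le_total h1.1.length h2.1.length with hle | hle
  · rw [key h1 h2 hle hne]
    exact ⟨h2, hv2, rfl⟩
  · rw [Set.inter_comm] at hne ⊢
    rw [key h2 h1 hle hne]
    exact ⟨h1, hv1, rfl⟩

/-- The observation-based policy induced by a pMDP policy (auxiliary). -/
noncomputable def obsPolicyAux [Nonempty X] (T : S → A → X → PMF S)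
    (πX : X × Hist S A → PMF A) : Hist S A → PMF A := fun oh =>
  letI := Classical.propDecidable (∃ y, IsHist (evalT T y) oh)
  if hx : ∃ y, IsHist (evalT T y) oh then πX (hx.choose, oh)
  else πX (Classical.arbitrary X, oh)

lemma obsPolicyAux_agree [Nonempty X] (T : S → A → X → PMF S)
    (πX : X × Hist S A → PMF A)
    (hind : ∀ (x y : X) (g : Hist S A), IsHist (evalT T x) g → IsHist (evalT T y) g →
      πX (x, g) = πX (y, g))
    (x : X) (g : Hist S A) (hg : IsHist (evalT T x) g) :
    obsPolicyAux T πX g = πX (x, g) := by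
  have hx : ∃ y, IsHist (evalT T y) g := ⟨x, hg⟩
  unfold obsPolicyAux
  rw [dif_pos hx]
  exact hind hx.choose x g hx.choose_spec hg

/-- Let `M` be a pMDP with induced POMDP `M'`, `p ∈ Dist(X)` a parameter
distribution, and `r : Runs_X → ℝ` a measurable objective. Set `r' = r ∘ f⁻¹` and
`i'(s,x) = i(s)·p(x)`. Then the values coincide: `Val^M(p,r) = Val^{M'}(r')`, where
`Val^M(p,r)` is the supremum of `E^M_{π_X,i,p}(r)` over all pMDP policies `π_X` and
`Val^{M'}(r')` is the supremum of `E^{M'}_{π',i'}(r')` over all POMDP policies `π'`. -/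
theorem value_correspondence [Nonempty S] [Nonempty A] [Nonempty X]
    (T : S → A → X → PMF S) (i : PMF S) (p : PMF X)
    (i' : PMF (S × X)) (hi' : ∀ s x, i' (s, x) = i s * p x)
    (PM : (X × Hist S A → PMF A) → Measure (RunsX T))
    (hPMprob : ∀ πX, IsProbabilityMeasure (PM πX))
    (hPM : ∀ (πX : X × Hist S A → PMF A) (x : X) (h : Hist S A), IsHist (evalT T x) h →
      PM πX (ConeX T x h) = p x * coneProb (evalT T x) i (fun h => πX (x, h)) h)
    (PO : (Hist (S × X) A → PMF A) → Measure (Runs (indT T)))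
    (hPOprob : ∀ π', IsProbabilityMeasure (PO π'))
    (hPO : ∀ (π' : Hist (S × X) A → PMF A) (h' : Hist (S × X) A), IsHist (indT T) h' →
      PO π' (Cone (indT T) h') = coneProb (indT T) i' π' h')
    (r : RunsX T → ℝ) (hr : Measurable r) :
    (⨆ πX : {π : X × Hist S A → PMF A // ∀ (x y : X) (h : Hist S A),
        IsHist (evalT T x) h → IsHist (evalT T y) h → π (x, h) = π (y, h)},
      ∫ q, r q ∂(PM πX.1)) =
    (⨆ π' : {π : Hist (S × X) A → PMF A // ∀ h1 h2 : Hist (S × X) A,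
        IsHist (indT T) h1 → IsHist (indT T) h2 → obsHist h1 = obsHist h2 → π h1 = π h2},
      ∫ ρ, r (Function.invFun (fRun T) ρ) ∂(PO π'.1)) := by
  classical
  have hmeas := measurable_fRun T
  have hli : Function.LeftInverse (Function.invFun (fRun T)) (fRun T) :=
    Function.leftInverse_invFun (fRun_injective T)
  -- measure correspondence
  have hmap_eq : ∀ (πX : X × Hist S A → PMF A) (π' : Hist (S × X) A → PMF A),
      (∀ (x : X) (g : Hist S A), IsHist (evalT T x) g → π' (fHistSeq x g) = πX (x, g)) →
      PO π' = (PM πX).map (fRun T) := by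
    intro πX π' hagree
    have h1 : IsProbabilityMeasure ((PM πX).map (fRun T)) := by
      have := hPMprob πX
      exact MeasureTheory.Measure.isProbabilityMeasure_map hmeas.aemeasurable
    have h2 := hPOprob π'
    refine MeasureTheory.ext_of_generate_finite _ rfl (isPiSystem_cones (indT T)) ?_ ?_
    · rintro C ⟨⟨l', tx⟩, hv, rfl⟩
      obtain ⟨t, x⟩ := tx
      have hvo : IsHist (evalT T x) (obsHist (l', (t, x))) := isHistL_obs T l' t x hv
      have hrep : fHistSeq x (obsHist (l', (t, x))) = (l', (t, x)) := fHistSeq_obsHist hv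
      rw [hPO π' _ hv,
        MeasureTheory.Measure.map_apply hmeas
          (MeasurableSpace.measurableSet_generateFrom ⟨_, hv, rfl⟩),
        ← hrep, fRun_preimage, hPM πX x _ hvo,
        coneProb_corr T i p i' hi' x π' (fun g => πX (x, g))
          (fun g hg => hagree x g hg) _ hvo]
    · simp [measure_univ]
  -- integral correspondence
  have hint : ∀ (πX : X × Hist S A → PMF A) (π' : Hist (S × X) A → PMF A),
      (∀ (x : X) (g : Hist S A), IsHist (evalT T x) g → π' (fHistSeq x g) = πX (x, g)) →
      ∫ ρ, r (Function.invFun (fRun T) ρ) ∂(PO π') = ∫ q, r q ∂(PM πX) := by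
    intro πX π' hagree
    rw [hmap_eq πX π' hagree,
      show (fun ρ => r (Function.invFun (fRun T) ρ)) = r ∘ Function.invFun (fRun T) from rfl,
      MeasureTheory.integral_map hmeas.aemeasurable
        ((hr.comp (measurable_invFun_fRun T)).aestronglyMeasurable)]
    exact MeasureTheory.integral_congr_ae (Filter.Eventually.of_forall fun q => by
      show r (Function.invFun (fRun T) (fRun T q)) = r q
      rw [hli q])
  have hrange :
      (Set.range fun πX : {π : X × Hist S A → PMF A // ∀ (x y : X) (h : Hist S A),
          IsHist (evalT T x) h → IsHist (evalT T y) h → π (x, h) = π (y, h)} =>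
        ∫ q, r q ∂(PM πX.1)) =
      (Set.range fun π' : {π : Hist (S × X) A → PMF A // ∀ h1 h2 : Hist (S × X) A,
          IsHist (indT T) h1 → IsHist (indT T) h2 → obsHist h1 = obsHist h2 → π h1 = π h2} =>
        ∫ ρ, r (Function.invFun (fRun T) ρ) ∂(PO π'.1)) := by
    ext v
    simp only [Set.mem_range]
    constructor
    · rintro ⟨πX, rfl⟩
      refine ⟨⟨fun h' => obsPolicyAux T πX.1 (obsHist h'),
        fun h1 h2 _ _ hobs => congrArg (obsPolicyAux T πX.1) hobs⟩, ?_⟩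
      refine hint πX.1 _ fun x g hg => ?_
      show obsPolicyAux T πX.1 (obsHist (fHistSeq x g)) = πX.1 (x, g)
      rw [obsHist_fHistSeq]
      exact obsPolicyAux_agree T πX.1 πX.2 x g hg
    · rintro ⟨π', rfl⟩
      refine ⟨⟨fun q => π'.1 (fHistSeq q.1 q.2), fun x y g hx hy => ?_⟩, ?_⟩
      · exact π'.2 (fHistSeq x g) (fHistSeq y g) (isHist_fHistSeq T x g.1 g.2 hx)
          (isHist_fHistSeq T y g.1 g.2 hy)
          (by rw [obsHist_fHistSeq, obsHist_fHistSeq])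
      · exact (hint _ π'.1 (fun x g _ => rfl)).symm
  exact congrArg sSup hrange

end PMDPEncoding
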